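/- Let n ≥ 1, let c : Fin n → ℝ be a value vector, let y : Fin n → ℝ satisfy y_i ≥ 0 for all i and Σ_i y_i = 1, and let 0 ≤ ε < 2. Let s be a permutation of Fin n with c_{s_1} ≤ c_{s_2} ≤ ⋯ ≤ c_{s_n}, and define the greedy output ỹ by ỹ_{s_n} = min(y_{s_n} + ε/2, 1) and, for 1 ≤ t < n, ỹ_{s_t} = max(0, y_{s_t} − max(0, ε/2 − Σ_{j<t} y_{s_j})). Then ỹ is a global maximizer of the gradient redirection problem: for every w : Fin n → ℝ with w_i ≥ 0 for all i, Σ_i w_i = 1, and Σ_i |w_i − y_i| ≤ ε, one has Σ_i c_i w_i ≤ Σ_i c_i ỹ_i. -/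

import Mathlib

open Finset

lemma aux_max_half (x : ℝ) : max 0 x = (x + |x|) / 2 := by
  rcases le_or_gt 0 x with h | h
  · rw [abs_of_nonneg h, max_eq_right h]; ring
  · rw [abs_of_neg h, max_eq_left h.le]; ring

lemma aux_step (a b δ : ℝ) (hb : 0 ≤ b) :
    max 0 (a - δ) + max 0 (b - max 0 (δ - a)) = max 0 (a + b - δ) := by
  simp only [max_def]; split_ifs <;> linarith

lemma aux_last (b δ : ℝ) :
    max 0 (1 - b - δ) + min (b + δ) 1 = 1 := by
  simp only [max_def, min_def]; split_ifs <;> linarith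

lemma aux_abel (n : ℕ) (C d : ℕ → ℝ)
    (hC : ∀ k, k + 2 ≤ n → C k ≤ C (k + 1))
    (hD : ∀ k, k < n → 0 ≤ ∑ t ∈ range (k + 1), d t)
    (hsum : ∑ t ∈ range n, d t = 0) :
    ∑ t ∈ range n, C t * d t ≤ 0 := by
  rcases Nat.eq_zero_or_pos n with h | h
  · simp [h]
  have hb := Finset.sum_range_by_parts C d n
  simp only [smul_eq_mul] at hb
  rw [hb, hsum, mul_zero, zero_sub, neg_nonpos]
  apply Finset.sum_nonneg
  intro i hi
  rw [Finset.mem_range] at hi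
  exact mul_nonneg (by linarith [hC i (by omega)]) (hD i (by omega))

lemma nat_version (n : ℕ) (hn : 1 ≤ n) (C Y W T : ℕ → ℝ) (δ : ℝ)
    (hδ0 : 0 ≤ δ)
    (hCmono : ∀ k, k + 2 ≤ n → C k ≤ C (k + 1))
    (hY0 : ∀ k, 0 ≤ Y k) (hW0 : ∀ k, 0 ≤ W k)
    (hYsum : ∑ k ∈ range n, Y k = 1)
    (hWsum : ∑ k ∈ range n, W k = 1)
    (habs : ∑ k ∈ range n, |W k - Y k| ≤ 2 * δ)
    (hT_last : T (n - 1) = min (Y (n - 1) + δ) 1)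
    (hT : ∀ k, k + 1 < n → T k = max 0 (Y k - max 0 (δ - ∑ j ∈ range k, Y j))) :
    ∑ k ∈ range n, C k * W k ≤ ∑ k ∈ range n, C k * T k := by
  -- key1 : lower bound on prefix sums of W
  have key1 : ∀ m, m ≤ n → ∑ k ∈ range m, Y k - δ ≤ ∑ k ∈ range m, W k := by
    intro m hm
    have h1 : ∑ k ∈ range m, (Y k - W k) ≤ ∑ k ∈ range m, max 0 (Y k - W k) :=
      Finset.sum_le_sum fun k _ => le_max_right _ _
    have h2 : ∑ k ∈ range m, max 0 (Y k - W k) ≤ ∑ k ∈ range n, max 0 (Y k - W k) :=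
      Finset.sum_le_sum_of_subset_of_nonneg (Finset.range_subset_range.mpr hm)
        (fun k _ _ => le_max_left _ _)
    have h3 : ∑ k ∈ range n, max 0 (Y k - W k) ≤ δ := by
      have : ∀ k ∈ range n, max 0 (Y k - W k) = ((Y k - W k) + |W k - Y k|) / 2 := by
        intro k _; rw [aux_max_half, abs_sub_comm]
      rw [Finset.sum_congr rfl this]
      have := Finset.sum_div (range n) (fun k => (Y k - W k) + |W k - Y k|) 2
      rw [← this]
      rw [Finset.sum_add_distrib, Finset.sum_sub_distrib, hYsum, hWsum]
      linarith
    have h4 : ∑ k ∈ range m, (Y k - W k) = ∑ k ∈ range m, Y k - ∑ k ∈ range m, W k :=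
      Finset.sum_sub_distrib _ _
    linarith
  -- key2 : prefix sums of T
  have key2 : ∀ k, k + 1 < n →
      ∑ t ∈ range (k + 1), T t = max 0 (∑ t ∈ range (k + 1), Y t - δ) := by
    intro k
    induction k with
    | zero =>
      intro h1
      rw [Finset.sum_range_one, Finset.sum_range_one, hT 0 h1]
      simp [max_eq_right hδ0]
    | succ k ih =>
      intro h1
      rw [Finset.sum_range_succ, ih (by omega), hT (k + 1) h1]
      conv_rhs => rw [Finset.sum_range_succ]
      exact aux_step _ _ _ (hY0 _)
  -- key3 : T sums to 1
  have key3 : ∑ k ∈ range n, T k = 1 := by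
    rcases Nat.lt_or_ge n 2 with h2 | h2
    · have hn1 : n = 1 := by omega
      subst hn1
      rw [Finset.sum_range_one]
      have : Y 0 = 1 := by simpa using hYsum
      simp only [show (1:ℕ) - 1 = 0 from rfl] at hT_last
      rw [hT_last, this, min_eq_right (by linarith)]
    · obtain ⟨m, rfl⟩ : ∃ m, n = m + 2 := ⟨n - 2, by omega⟩
      have h4 : T (m + 1) = min (Y (m + 1) + δ) 1 := hT_last
      rw [Finset.sum_range_succ, key2 m (by omega), h4]
      have hY' : ∑ t ∈ range (m + 1), Y t = 1 - Y (m + 1) := by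
        have := hYsum
        rw [Finset.sum_range_succ] at this
        linarith
      rw [hY']
      exact aux_last _ _
  -- conclude via Abel summation
  have habel : ∑ t ∈ range n, C t * (W t - T t) ≤ 0 := by
    apply aux_abel n C _ hCmono
    · intro k hk
      rw [Finset.sum_sub_distrib]
      rcases Nat.lt_or_ge (k + 1) n with h | h
      · rw [key2 k h]
        have hWnn : 0 ≤ ∑ t ∈ range (k + 1), W t :=
          Finset.sum_nonneg fun t _ => hW0 t
        have := key1 (k + 1) (by omega)
        simp only [sub_nonneg, max_le_iff]
        exact ⟨hWnn, this⟩
      · have hkn : k + 1 = n := by omega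
        rw [hkn, hWsum, key3]; norm_num
    · rw [Finset.sum_sub_distrib, hWsum, key3]; norm_num
  have : ∑ t ∈ range n, C t * (W t - T t)
      = ∑ t ∈ range n, C t * W t - ∑ t ∈ range n, C t * T t := by
    rw [← Finset.sum_sub_distrib]; congr 1; ext t; ring
  linarith [this ▸ habel]

lemma aux_sum_Iio {n : ℕ} (f : Fin n → ℝ) (t : Fin n) :
    ∑ j ∈ Finset.Iio t, f j = ∑ j ∈ Finset.range t.val, if h : j < n then f ⟨j, h⟩ else 0 := by
  rw [← Nat.Iio_eq_range, ← Fin.map_valEmbedding_Iio, Finset.sum_map]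
  exact Finset.sum_congr rfl fun x _ => by simp [x.isLt]



/-- **Optimality of the greedy gradient redirection algorithm (Algorithm 1).**
Given a value vector `c`, a probability vector `y`, a budget `0 ≤ ε < 2`, and a
permutation `s` sorting `c` in nondecreasing order, the greedy output `ty`
(with `ty (s last) = min (y (s last) + ε/2) 1` and
`ty (s t) = max 0 (y (s t) - max 0 (ε/2 - ∑_{j<t} y (s j)))` for `t < last`)
maximizes `⟨c, w⟩` over all probability vectors `w` with `‖w - y‖₁ ≤ ε`. -/
theorem greedy_gradient_redirection_optimal
    (n : ℕ) (hn : 1 ≤ n) (c y : Fin n → ℝ)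
    (hy0 : ∀ i, 0 ≤ y i) (hy1 : ∑ i, y i = 1)
    (ε : ℝ) (hε0 : 0 ≤ ε) (hε2 : ε < 2)
    (s : Equiv.Perm (Fin n))
    (hs : Monotone (fun t => c (s t)))
    (ty : Fin n → ℝ)
    (hty_last : ty (s ⟨n - 1, by omega⟩) = min (y (s ⟨n - 1, by omega⟩) + ε / 2) 1)
    (hty : ∀ t : Fin n, t ≠ ⟨n - 1, by omega⟩ →
      ty (s t) = max 0 (y (s t) - max 0 (ε / 2 - ∑ j ∈ Finset.Iio t, y (s j))))
    (w : Fin n → ℝ) (hw0 : ∀ i, 0 ≤ w i) (hw1 : ∑ i, w i = 1)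
    (hwb : ∑ i, |w i - y i| ≤ ε) :
    ∑ i, c i * w i ≤ ∑ i, c i * ty i := by
  classical
  set F : (Fin n → ℝ) → ℕ → ℝ :=
    fun f k => if h : k < n then f (s ⟨k, h⟩) else 0 with hF
  have hFin : ∀ f : Fin n → ℝ, ∑ i, f i = ∑ k ∈ Finset.range n, F f k := by
    intro f
    rw [← Equiv.sum_comp s f, ← Fin.sum_univ_eq_sum_range (fun k => F f k) n]
    exact Finset.sum_congr rfl fun i _ => by simp [hF, i.isLt]
  have hmul : ∀ (f g : Fin n → ℝ) (k : ℕ), F (fun i => f i * g i) k = F f k * F g k := by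
    intro f g k
    by_cases h : k < n <;> simp [hF, h]
  have habs' : ∀ (f g : Fin n → ℝ) (k : ℕ), F (fun i => |f i - g i|) k = |F f k - F g k| := by
    intro f g k
    by_cases h : k < n <;> simp [hF, h]
  -- instantiate nat_version
  have main := nat_version n hn (F c) (F y) (F w) (F ty) (ε / 2)
    (by linarith)
    (by
      intro k hk
      simp only [hF]
      rw [dif_pos (by omega : k < n), dif_pos (by omega : k + 1 < n)]
      exact hs (by simp [Fin.mk_le_mk]))
    (by
      intro k
      by_cases h : k < n <;> simp [hF, h]
      exact hy0 _)
    (by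
      intro k
      by_cases h : k < n <;> simp [hF, h]
      exact hw0 _)
    (by rw [← hFin]; exact hy1)
    (by rw [← hFin]; exact hw1)
    (by
      calc ∑ k ∈ Finset.range n, |F w k - F y k|
          = ∑ k ∈ Finset.range n, F (fun i => |w i - y i|) k :=
            Finset.sum_congr rfl fun k _ => (habs' w y k).symm
        _ = ∑ i, |w i - y i| := (hFin (fun i => |w i - y i|)).symm
        _ ≤ ε := hwb
        _ = 2 * (ε / 2) := by ring)
    (by
      simp only [hF]
      rw [dif_pos (by omega : n - 1 < n), dif_pos (by omega : n - 1 < n)]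
      exact hty_last)
    (by
      intro k hk
      simp only [hF]
      rw [dif_pos (by omega : k < n), dif_pos (by omega : k < n)]
      have hne : (⟨k, by omega⟩ : Fin n) ≠ ⟨n - 1, by omega⟩ := by
        simp only [ne_eq, Fin.mk.injEq]; omega
      rw [hty ⟨k, by omega⟩ hne, aux_sum_Iio (fun j => y (s j)) ⟨k, by omega⟩])
  calc ∑ i, c i * w i
      = ∑ k ∈ Finset.range n, F c k * F w k := by
        rw [hFin (fun i => c i * w i)]
        exact Finset.sum_congr rfl fun k _ => hmul c w k
    _ ≤ ∑ k ∈ Finset.range n, F c k * F ty k := main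
    _ = ∑ k ∈ Finset.range n, F (fun i => c i * ty i) k :=
        Finset.sum_congr rfl fun k _ => (hmul c ty k).symm
    _ = ∑ i, c i * ty i := (hFin (fun i => c i * ty i)).symm
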